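/- Let V be a finite-dimensional real vector space with a symmetric bilinear form B, let M ⊂ V be a full lattice (a free ℤ-submodule of rank dim V that spans V over ℝ), and let e ∈ V with B(e,e) ≠ 0. Define the reflection r_e : V → V by r_e(x) = x − (2B(x,e)/B(e,e))·e. If r_e(M) ⊆ M, then there exists a vector α ∈ M that is primitive in M and proportional to e (α = c·e for some nonzero real c) such that 2B(x,α) ∈ B(α,α)·ℤ for every x ∈ M. -/

import Mathlib

/-- let `V` be a finite-dimensional real vector space with a symmetric
bilinear form `B`, let `M ⊂ V` be a full lattice, and let `e ∈ V` with `B(e,e) ≠ 0`. If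
the reflection `r_e : x ↦ x - (2B(x,e)/B(e,e))·e` maps `M` into itself, then there is a
vector `α ∈ M`, primitive in `M` and proportional to `e`, such that
`2B(x,α) ∈ B(α,α)·ℤ` for every `x ∈ M`. -/
theorem stmt19 {V : Type*} [AddCommGroup V] [Module ℝ V] [FiniteDimensional ℝ V]
    (B : LinearMap.BilinForm ℝ V) (hsymm : ∀ x y, B x y = B y x)
    (M : Submodule ℤ V)
    (hfree : Nonempty (Module.Basis (Fin (Module.finrank ℝ V)) ℤ M))
    (hspan : Submodule.span ℝ (M : Set V) = ⊤)
    (e : V) (he : B e e ≠ 0)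
    (hrefl : ∀ x ∈ M, x - ((2 * B x e) / B e e) • e ∈ M) :
    ∃ (α : V) (hα : α ∈ M) (c : ℝ), c ≠ 0 ∧ α = c • e ∧
      (∀ (n : ℤ) (y : M ⧸ Submodule.span ℤ {(⟨α, hα⟩ : M)}), n • y = 0 → n = 0 ∨ y = 0) ∧
      ∀ x ∈ M, ∃ n : ℤ, 2 * B x α = n * B α α := by
  classical
  obtain ⟨b⟩ := hfree
  have he0 : e ≠ 0 := fun h => he (by simp [h])
  set f : Fin (Module.finrank ℝ V) → V := fun i => ((b i : M) : V) with hf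
  -- M is contained in the ℝ-span of f
  have hMle : (M : Set V) ⊆ ↑(Submodule.span ℝ (Set.range f)) := by
    intro x hx
    have h1 : (⟨x, hx⟩ : M) ∈ Submodule.span ℤ (Set.range b) := by
      rw [b.span_eq]; trivial
    have h2 : x ∈ Submodule.map M.subtype (Submodule.span ℤ (Set.range b)) :=
      ⟨⟨x, hx⟩, h1, rfl⟩
    rw [Submodule.map_span] at h2
    have hr : M.subtype '' Set.range b = Set.range f := by
      rw [← Set.range_comp]; rfl
    rw [hr] at h2
    have h3 : Submodule.span ℤ (Set.range f) ≤
        Submodule.restrictScalars ℤ (Submodule.span ℝ (Set.range f)) := by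
      rw [Submodule.span_le]
      exact fun y hy => Submodule.subset_span hy
    exact h3 h2
  have hle : ⊤ ≤ Submodule.span ℝ (Set.range f) := by
    rw [← hspan, Submodule.span_le]
    exact hMle
  set bV : Module.Basis (Fin (Module.finrank ℝ V)) ℝ V :=
    basisOfTopLeSpanOfCardEqFinrank f hle (Fintype.card_fin _) with hbV
  have hbVcoe : ⇑bV = f := coe_basisOfTopLeSpanOfCardEqFinrank f hle (Fintype.card_fin _)
  -- compatibility of coordinates
  have hcompat : ∀ (m : M) (i : Fin (Module.finrank ℝ V)),
      bV.repr (m : V) i = ((b.repr m i : ℤ) : ℝ) := by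
    intro m i
    have hm : (m : V) = ∑ j, ((b.repr m j : ℤ) : ℝ) • bV j := by
      conv_lhs => rw [← b.sum_repr m]
      push_cast [hbVcoe]
      simp [Int.cast_smul_eq_zsmul, hf]
    rw [hm]
    have := bV.repr_sum_self (fun j => ((b.repr m j : ℤ) : ℝ))
    rw [this]
  -- there is x ∈ M with B x e ≠ 0
  have hx : ∃ x ∈ M, B x e ≠ 0 := by
    by_contra h
    push_neg at h
    have hker : Submodule.span ℝ (M : Set V) ≤ LinearMap.ker (B.flip e) := by
      rw [Submodule.span_le]
      intro y hy
      simp [LinearMap.mem_ker, h y hy]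
    rw [hspan] at hker
    exact he (hker (Submodule.mem_top : e ∈ ⊤))
  obtain ⟨x, hxM, hxe⟩ := hx
  set d : ℝ := (2 * B x e) / B e e with hd
  have hd0 : d ≠ 0 := by
    apply div_ne_zero _ he
    simpa using hxe
  have hdeM : d • e ∈ M := by
    have := hrefl x hxM
    have h2 : x - (x - d • e) ∈ M := M.sub_mem hxM this
    simpa using h2
  have hde0 : d • e ≠ 0 := smul_ne_zero hd0 he0
  -- find a coordinate where e is nonzero
  have hi0 : ∃ i, bV.repr e i ≠ 0 := by
    by_contra h
    push_neg at h
    have : bV.repr e = 0 := Finsupp.ext h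
    exact he0 (by simpa using congrArg bV.repr.symm this)
  obtain ⟨i₀, hri₀⟩ := hi0
  set r : ℝ := bV.repr e i₀ with hr
  -- the subgroup of ℤ
  set K : AddSubgroup ℤ :=
    { carrier := {k : ℤ | ((k : ℝ) / r) • e ∈ M}
      zero_mem' := by simp [Submodule.zero_mem]
      add_mem' := by
        intro a b ha hb
        show (((a + b : ℤ) : ℝ) / r) • e ∈ M
        push_cast
        rw [add_div, add_smul]
        exact M.add_mem ha hb
      neg_mem' := by
        intro a ha
        show (((-a : ℤ) : ℝ) / r) • e ∈ M
        push_cast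
        rw [neg_div, neg_smul]
        exact M.neg_mem ha }
    with hK
  -- key: if t • e ∈ M then t * r is an integer in K and t = (t*r)/r
  have hkey : ∀ t : ℝ, t • e ∈ M → ∃ k : ℤ, (k : ℝ) = t * r ∧ k ∈ K := by
    intro t ht
    refine ⟨b.repr ⟨t • e, ht⟩ i₀, ?_, ?_⟩
    · rw [← hcompat ⟨t • e, ht⟩ i₀]
      simp [hr]
    · have hcast : ((b.repr ⟨t • e, ht⟩ i₀ : ℤ) : ℝ) = t * r := by
        rw [← hcompat ⟨t • e, ht⟩ i₀]; simp [hr]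
      show ((((b.repr ⟨t • e, ht⟩ i₀ : ℤ) : ℝ)) / r) • e ∈ M
      rw [hcast, mul_div_assoc, div_self hri₀, mul_one]
      exact ht
  obtain ⟨a, haK⟩ := Int.subgroup_cyclic K
  -- d gives a nonzero element of K
  obtain ⟨kd, hkd, hkdK⟩ := hkey d hdeM
  have ha0 : a ≠ 0 := by
    rintro rfl
    rw [haK] at hkdK
    simp [AddSubgroup.mem_closure_singleton] at hkdK
    apply hd0
    have hc : (kd : ℝ) = 0 := by exact_mod_cast hkdK.symm
    rw [hkd] at hc
    rcases mul_eq_zero.mp hc with h | h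
    · exact h
    · exact absurd h hri₀
  have haKmem : a ∈ K := by rw [haK]; exact AddSubgroup.mem_closure_singleton.mpr ⟨1, by simp⟩
  set c₀ : ℝ := (a : ℝ) / r with hc₀
  have hc₀0 : c₀ ≠ 0 := div_ne_zero (Int.cast_ne_zero.mpr ha0) hri₀
  have hc₀M : c₀ • e ∈ M := haKmem
  -- every t with t • e ∈ M is an integer multiple of c₀
  have hmult : ∀ t : ℝ, t • e ∈ M → ∃ k : ℤ, t = (k : ℝ) * c₀ := by
    intro t ht
    obtain ⟨z, hz, hzK⟩ := hkey t ht
    rw [haK, AddSubgroup.mem_closure_singleton] at hzK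
    obtain ⟨k, hk⟩ := hzK
    refine ⟨k, ?_⟩
    have hta : t * r = (k : ℝ) * ((a : ℝ)) := by
      rw [← hz, ← hk, smul_eq_mul]; push_cast; ring
    rw [hc₀, ← mul_div_assoc, eq_div_iff hri₀]
    exact hta
  refine ⟨c₀ • e, hc₀M, c₀, hc₀0, rfl, ?_, ?_⟩
  · -- primitivity
    intro n y hny
    by_cases hn : n = 0
    · exact Or.inl hn
    right
    obtain ⟨y', rfl⟩ := Submodule.Quotient.mk_surjective _ y
    rw [← Submodule.Quotient.mk_smul, Submodule.Quotient.mk_eq_zero] at hny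
    rw [Submodule.mem_span_singleton] at hny
    obtain ⟨m, hm⟩ := hny
    -- in V : n • y' = m • (c₀ • e)
    have h1 : m • (c₀ • e) = n • (y' : V) := by
      have := congrArg (M.subtype) hm
      simpa using this
    have hV : (n : ℝ) • (y' : V) = ((m : ℝ) * c₀) • e := by
      rw [← Int.cast_smul_eq_zsmul ℝ m, ← Int.cast_smul_eq_zsmul ℝ n] at h1
      rw [← h1, smul_smul]
    have hn' : (n : ℝ) ≠ 0 := Int.cast_ne_zero.mpr hn
    have hy'e : (y' : V) = ((m : ℝ) * c₀ / n) • e := by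
      rw [eq_comm, div_eq_mul_inv, mul_comm ((m : ℝ) * c₀) _, ← smul_smul, ← hV,
        smul_smul, inv_mul_cancel₀ hn', one_smul]
    have hmem : ((m : ℝ) * c₀ / n) • e ∈ M := hy'e ▸ y'.2
    obtain ⟨k, hk⟩ := hmult _ hmem
    have hy'k : (y' : V) = (k : ℤ) • (c₀ • e) := by
      rw [hy'e, hk, mul_smul, Int.cast_smul_eq_zsmul]
    rw [Submodule.Quotient.mk_eq_zero, Submodule.mem_span_singleton]
    refine ⟨k, ?_⟩
    apply Subtype.ext
    simp [hy'k]
  · -- divisibility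
    intro z hzM
    set t : ℝ := (2 * B z e) / B e e with ht
    have hteM : t • e ∈ M := by
      have h2 : z - (z - t • e) ∈ M := M.sub_mem hzM (hrefl z hzM)
      simpa using h2
    obtain ⟨k, hk⟩ := hmult t hteM
    refine ⟨k, ?_⟩
    have hBz : B z (c₀ • e) = c₀ * B z e := by simp [smul_eq_mul]
    have hBe : B (c₀ • e) (c₀ • e) = c₀ * c₀ * (B e e) := by
      simp [smul_eq_mul]; ring
    rw [hBz, hBe]
    have : 2 * B z e = t * B e e := by
      rw [ht]; field_simp
    rw [show 2 * (c₀ * B z e) = c₀ * (2 * B z e) by ring, this, hk]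
    ring
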